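/- Let U be a random vector in ℝ^k, Z a random variable, and ε a random vector in ℝ^p, with U, Z, ε mutually independent. Let A ∈ ℝ^{p×k} and b ∈ ℝ^p, and define X_S = A U + b + ε and X_T = A U + ε (so X_S and X_T are the covariates in source and target domains under the factor model X = AU + bZ + ε with Z = 1 in source and Z = 0 in target). If Φ ∈ ℝ^{q×p} is a linear map such that Φ X_S and Φ X_T have the same distribution, then Φ b = 0. -/

import Mathlib

open MeasureTheory ProbabilityTheory

/-- A probability measure on `ℝ` cannot be invariant under a nonzero translation. -/
lemma no_shift_invariant_prob (ν : Measure ℝ) [IsProbabilityMeasure ν] (a : ℝ) (ha : 0 < a)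
    (h : ∀ x : ℝ, ν (Set.Iic (x + a)) = ν (Set.Iic x)) : False := by
  have hup : ∀ n : ℕ, ν (Set.Iic ((n : ℝ) * a)) = ν (Set.Iic 0) := by
    intro n
    induction n with
    | zero => simp
    | succ n ih =>
      have := h ((n : ℝ) * a)
      push_cast
      rw [add_mul, one_mul, this, ih]
  have hdown : ∀ n : ℕ, ν (Set.Iic (-((n : ℝ) * a))) = ν (Set.Iic 0) := by
    intro n
    induction n with
    | zero => simp
    | succ n ih =>
      have := h (-(((n : ℝ) + 1) * a))
      have harg : -(((n : ℝ) + 1) * a) + a = -((n : ℝ) * a) := by ring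
      rw [harg] at this
      push_cast
      rw [← this, ih]
  -- limit along n * a → ∞ gives ν (Iic 0) = 1
  have hseq : Filter.Tendsto (fun n : ℕ => (n : ℝ) * a) Filter.atTop Filter.atTop :=
    Filter.Tendsto.atTop_mul_const ha tendsto_natCast_atTop_atTop
  have h1 : Filter.Tendsto (fun n : ℕ => ν (Set.Iic ((n : ℝ) * a))) Filter.atTop
      (nhds (ν Set.univ)) := (tendsto_measure_Iic_atTop ν).comp hseq
  have hone : ν (Set.Iic 0) = ν Set.univ := by
    have : Filter.Tendsto (fun _ : ℕ => ν (Set.Iic 0)) Filter.atTop (nhds (ν Set.univ)) := by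
      simpa only [hup] using h1
    exact tendsto_nhds_unique tendsto_const_nhds this
  -- limit along -(n * a) → -∞ gives ν (Iic 0) = 0
  have hanti : Antitone (fun n : ℕ => Set.Iic (-((n : ℝ) * a))) := by
    intro m n hmn
    apply Set.Iic_subset_Iic.2
    have : (m : ℝ) * a ≤ (n : ℝ) * a :=
      mul_le_mul_of_nonneg_right (Nat.cast_le.2 hmn) ha.le
    linarith
  have hiInter : (⋂ n : ℕ, Set.Iic (-((n : ℝ) * a))) = ∅ := by
    ext x
    simp only [Set.mem_iInter, Set.mem_Iic, Set.mem_empty_iff_false, iff_false, not_forall,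
      not_le]
    obtain ⟨n, hn⟩ := exists_nat_gt ((-x) / a)
    refine ⟨n, ?_⟩
    have := (div_lt_iff₀ ha).mp hn
    linarith
  have h2 : Filter.Tendsto (fun n : ℕ => ν (Set.Iic (-((n : ℝ) * a)))) Filter.atTop
      (nhds (ν (⋂ n : ℕ, Set.Iic (-((n : ℝ) * a))))) :=
    tendsto_measure_iInter_atTop (fun n => (measurableSet_Iic).nullMeasurableSet) hanti
      ⟨0, measure_ne_top ν _⟩
  rw [hiInter] at h2
  have hzero : ν (Set.Iic 0) = 0 := by
    have : Filter.Tendsto (fun _ : ℕ => ν (Set.Iic 0)) Filter.atTop (nhds (ν (∅ : Set ℝ))) := by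
      simpa only [hdown] using h2
    simpa using tendsto_nhds_unique tendsto_const_nhds this
  rw [hzero] at hone
  simp [measure_univ] at hone

/-- Theorem 4 (`thm:factor_DA_IF`): under the factor model `X_S = AU + b + ε`,
`X_T = AU + ε` with `U, Z, ε` mutually independent, if a linear representation `Φ`
aligns the distributions of `Φ X_S` and `Φ X_T`, then `Φ b = 0`. -/
theorem factor_model_alignment_kills_sensitive_direction
    {Ω : Type*} [MeasurableSpace Ω] (μ : Measure Ω) [IsProbabilityMeasure μ]
    {k p q : ℕ}
    (U : Ω → (Fin k → ℝ)) (Z : Ω → ℝ) (ε : Ω → (Fin p → ℝ))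
    (hU : Measurable U) (hZ : Measurable Z) (hε : Measurable ε)
    (hindep : iIndepFun
      (m := (Fin.cons (inferInstance : MeasurableSpace (Fin k → ℝ))
        (Fin.cons (inferInstance : MeasurableSpace ℝ)
          (Fin.cons (inferInstance : MeasurableSpace (Fin p → ℝ)) (fun i => i.elim0)) :
            ∀ i : Fin 2, MeasurableSpace (![Fin k → ℝ, ℝ, Fin p → ℝ] i.succ)) :
        ∀ i : Fin 3, MeasurableSpace (![Fin k → ℝ, ℝ, Fin p → ℝ] i)))
      (Fin.cons U (Fin.cons Z (Fin.cons ε (fun i => i.elim0)) :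
          ∀ i : Fin 2, Ω → ![Fin k → ℝ, ℝ, Fin p → ℝ] i.succ) :
        ∀ i : Fin 3, Ω → ![Fin k → ℝ, ℝ, Fin p → ℝ] i) μ)
    (A : Matrix (Fin p) (Fin k) ℝ) (b : Fin p → ℝ)
    (XS XT : Ω → (Fin p → ℝ))
    (hXS : ∀ ω, XS ω = A.mulVec (U ω) + b + ε ω)
    (hXT : ∀ ω, XT ω = A.mulVec (U ω) + ε ω)
    (Φ : Matrix (Fin q) (Fin p) ℝ)
    (halign : μ.map (fun ω => Φ.mulVec (XS ω)) = μ.map (fun ω => Φ.mulVec (XT ω))) :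
    Φ.mulVec b = 0 := by
  classical
  by_contra hcne
  set c : Fin q → ℝ := Φ.mulVec b with hc
  obtain ⟨j, hj⟩ : ∃ j, c j ≠ 0 := by
    by_contra h
    push_neg at h
    exact hcne (funext h)
  -- measurability of Φ XT
  have hmulA : Measurable (fun v : Fin k → ℝ => A.mulVec v) := by
    exact (LinearMap.continuous_of_finiteDimensional A.mulVecLin).measurable
  have hmulΦ : Measurable (fun v : Fin p → ℝ => Φ.mulVec v) := by
    exact (LinearMap.continuous_of_finiteDimensional Φ.mulVecLin).measurable
  have hXT' : Measurable XT := by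
    have : XT = fun ω => A.mulVec (U ω) + ε ω := funext hXT
    rw [this]
    exact (hmulA.comp hU).add hε
  have hXS' : Measurable XS := by
    have : XS = fun ω => A.mulVec (U ω) + b + ε ω := funext hXS
    rw [this]
    exact ((hmulA.comp hU).add measurable_const).add hε
  -- pointwise: Φ XS = Φ XT + c
  have hpt : ∀ ω, Φ.mulVec (XS ω) = Φ.mulVec (XT ω) + c := by
    intro ω
    rw [hXS, hXT, hc]
    rw [show A.mulVec (U ω) + b + ε ω = (A.mulVec (U ω) + ε ω) + b by ring_nf]
    rw [Matrix.mulVec_add]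
  -- project onto coordinate j
  set f : Ω → ℝ := fun ω => Φ.mulVec (XT ω) j with hf
  have hfm : Measurable f := (measurable_pi_apply j).comp (hmulΦ.comp hXT')
  set a : ℝ := c j with hadef
  have hmap : μ.map (fun ω => f ω + a) = μ.map f := by
    have h1 : μ.map (fun ω => Φ.mulVec (XS ω) j) = μ.map (fun ω => Φ.mulVec (XT ω) j) := by
      have hmS : Measurable fun ω => Φ.mulVec (XS ω) := hmulΦ.comp hXS'
      have hmT : Measurable fun ω => Φ.mulVec (XT ω) := hmulΦ.comp hXT'
      have e1 : μ.map (fun ω => Φ.mulVec (XS ω) j)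
          = (μ.map (fun ω => Φ.mulVec (XS ω))).map (fun v => v j) := by
        rw [Measure.map_map (measurable_pi_apply j) hmS]
        rfl
      have e2 : μ.map (fun ω => Φ.mulVec (XT ω) j)
          = (μ.map (fun ω => Φ.mulVec (XT ω))).map (fun v => v j) := by
        rw [Measure.map_map (measurable_pi_apply j) hmT]
        rfl
      rw [e1, e2, halign]
    have e3 : (fun ω => Φ.mulVec (XS ω) j) = fun ω => f ω + a := by
      funext ω
      rw [hpt ω]
      rfl
    rw [← e3, h1]
  -- transfer to the pushforward measure ν
  set ν : Measure ℝ := μ.map f with hν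
  have : IsProbabilityMeasure ν := Measure.isProbabilityMeasure_map hfm.aemeasurable
  have hνshift : ∀ x : ℝ, ν (Set.Iic (x - a)) = ν (Set.Iic x) := by
    intro x
    have h1 : μ.map (fun ω => f ω + a) = ν.map (fun y => y + a) := by
      rw [hν, Measure.map_map (measurable_add_const a) hfm]
      rfl
    have h2 : ν.map (fun y => y + a) = ν := by rw [← h1, hmap]
    have h3 : ν.map (fun y => y + a) (Set.Iic x) = ν (Set.Iic (x - a)) := by
      rw [Measure.map_apply (measurable_add_const a) measurableSet_Iic]
      congr 1
      ext y
      simp [Set.mem_Iic, le_sub_iff_add_le]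
    rw [← h3, h2]
  -- derive invariance in the form needed for the helper lemma, for |a|
  rcases hj.lt_or_gt with hneg | hpos
  · -- a < 0 : shift by -a > 0
    refine no_shift_invariant_prob ν (-a) (by simpa [hadef] using neg_pos.mpr hneg) ?_
    intro x
    simpa [sub_eq_add_neg] using hνshift x
  · -- a > 0
    refine no_shift_invariant_prob ν a hpos ?_
    intro x
    have := hνshift (x + a)
    simp only [add_sub_cancel_right] at this
    exact this.symm
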